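/- Let A be a unital C*-algebra, τ a positive linear functional on A, and c > 0 a constant such that τ(p) ≥ c for every nonzero projection p ∈ A. Then A contains no self-adjoint element whose spectrum is a Cantor set; that is, for every self-adjoint x ∈ A the (nonempty) spectrum of x is not both nowhere dense in ℝ and without isolated points. -/

import Mathlib

set_option maxHeartbeats 1000000

/-- If a unital C*-algebra with a positive linear functional `τ` has the Kadison property
with constant `c > 0` (i.e. `τ(p) ≥ c` for every nonzero projection `p`), then no
self-adjoint element has spectrum which is a Cantor set, i.e. for every self-adjoint `x`
the spectrum of `x` is not both nowhere dense in `ℝ` and without isolated points. -/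
theorem no_cantor_spectrum_of_kadison_property
    {A : Type*} [CStarAlgebra A] [Nontrivial A]
    (τ : A →ₗ[ℂ] ℂ)
    (hτpos : ∀ a : A, 0 ≤ (τ (star a * a)).re ∧ (τ (star a * a)).im = 0)
    (c : ℝ) (hc : 0 < c)
    (hK : ∀ p : A, p ≠ 0 → IsSelfAdjoint p → p * p = p → c ≤ (τ p).re)
    (x : A) (hx : IsSelfAdjoint x) :
    ¬ (IsNowhereDense (spectrum ℝ x) ∧ Preperfect (spectrum ℝ x)) := by
  rintro ⟨hND, hPP⟩
  set s : Set ℝ := spectrum ℝ x with hs_def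
  have hsclosed : IsClosed s := spectrum.isClosed x
  have hscompact : IsCompact s := spectrum.isCompact x
  have hint : interior s = ∅ := by
    rw [IsNowhereDense, hsclosed.closure_eq] at hND
    exact hND
  -- separator lemma
  have hsep : ∀ a b : ℝ, a < b → ∃ z, a < z ∧ z < b ∧ z ∉ s := by
    intro a b hab
    by_contra h
    push_neg at h
    have hsub : Set.Ioo a b ⊆ s := fun z hz => h z hz.1 hz.2
    have : Set.Ioo a b ⊆ interior s := interior_maximal hsub isOpen_Ioo
    rw [hint] at this
    exact (Set.nonempty_Ioo.mpr hab).ne_empty (Set.subset_empty_iff.mp this)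
  have hsne : s.Nonempty := hx.spectrum_nonempty
  -- low and high points outside s
  have hlow : ∀ z ∈ s, sInf s - 1 < z := by
    intro z hz
    have := csInf_le hscompact.bddBelow hz
    linarith
  have hlow' : sInf s - 1 ∉ s := fun h => by have := hlow _ h; linarith
  have hhigh : ∀ z ∈ s, z < sSup s + 1 := by
    intro z hz
    have := le_csSup hscompact.bddAbove hz
    linarith
  have hhigh' : sSup s + 1 ∉ s := fun h => by have := hhigh _ h; linarith
  -- s is infinite
  have hinf : s.Infinite := by
    intro hfin
    obtain ⟨z, hz⟩ := hsne
    have hacc := hPP z hz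
    rw [accPt_iff_frequently] at hacc
    have hev : ∀ᶠ y in nhds z, ¬(y ≠ z ∧ y ∈ s) := by
      have hclosed : IsClosed (s \ {z}) := hfin.diff.isClosed
      have hmem : (s \ {z})ᶜ ∈ nhds z := hclosed.isOpen_compl.mem_nhds (by simp)
      filter_upwards [hmem] with y hy hy2
      exact hy ⟨hy2.2, hy2.1⟩
    obtain ⟨y, hy1, hy2⟩ := (hacc.and_eventually hev).exists
    exact hy2 hy1
  -- choose n
  obtain ⟨n, hn⟩ := exists_nat_gt ((τ 1).re / c)
  have hnc : (τ 1).re < n * c := by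
    rwa [div_lt_iff₀ hc] at hn
  -- choose n points of s
  obtain ⟨T, hTs, hTcard⟩ := hinf.exists_subset_card_eq n
  set t' : ℕ → ℝ := fun k => if h : k < n then (T.orderIsoOfFin hTcard ⟨k, h⟩ : ℝ) else 0
    with ht'_def
  have ht'mem : ∀ k, k < n → t' k ∈ s := by
    intro k hk
    simp only [ht'_def, dif_pos hk]
    exact hTs (T.orderIsoOfFin hTcard ⟨k, hk⟩).2
  have ht'mono : ∀ k, k + 1 < n → t' k < t' (k + 1) := by
    intro k hk
    have hk' : k < n := by omega
    simp only [ht'_def, dif_pos hk, dif_pos hk']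
    have : (⟨k, hk'⟩ : Fin n) < ⟨k + 1, hk⟩ := by simp [Fin.lt_def]
    exact (T.orderIsoOfFin hTcard).strictMono this
  -- choose separators
  have hsepn : ∀ k : ℕ, ∃ z, z ∉ s ∧ (k + 1 < n → t' k < z ∧ z < t' (k + 1)) := by
    intro k
    by_cases h : k + 1 < n
    · obtain ⟨z, h1, h2, h3⟩ := hsep (t' k) (t' (k + 1)) (ht'mono k h)
      exact ⟨z, h3, fun _ => ⟨h1, h2⟩⟩
    · exact ⟨sInf s - 1, hlow', fun hk => absurd hk h⟩
  choose sep hsep1 hsep2 using hsepn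
  -- the grid
  set g : ℕ → ℝ := fun k => if k = 0 then sInf s - 1 else
      if k < n then sep (k - 1) else sSup s + 1 with hg_def
  have hg_notmem : ∀ k, g k ∉ s := by
    intro k
    simp only [hg_def]
    split_ifs with h1 h2
    · exact hlow'
    · exact hsep1 _
    · exact hhigh'
  have hgl : ∀ k, k < n → g k < t' k := by
    intro k hk
    by_cases h1 : k = 0
    · have hg1 : g k = sInf s - 1 := by simp only [hg_def]; rw [if_pos h1]
      rw [hg1]; exact hlow _ (ht'mem k hk)
    · have hg1 : g k = sep (k - 1) := by
        simp only [hg_def]; rw [if_neg h1, if_pos hk]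
      rw [hg1]
      have hk1 : k - 1 + 1 < n := by omega
      have := (hsep2 (k - 1) hk1).2
      rwa [show k - 1 + 1 = k by omega] at this
  have hgr : ∀ k, k < n → t' k < g (k + 1) := by
    intro k hk
    by_cases h2 : k + 1 < n
    · have h3 := (hsep2 k h2).1
      have hg1 : g (k + 1) = sep k := by
        simp only [hg_def]
        rw [if_neg (by omega : ¬(k + 1 = 0)), if_pos h2]
        congr 1
      rw [hg1]; exact h3
    · have hg1 : g (k + 1) = sSup s + 1 := by
        simp only [hg_def]
        rw [if_neg (by omega : ¬(k + 1 = 0)), if_neg h2]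
      rw [hg1]; exact hhigh _ (ht'mem k hk)
  have gmono_succ : ∀ k, k < n → g k < g (k + 1) :=
    fun k hk => (hgl k hk).trans (hgr k hk)
  have gmono : ∀ i j : ℕ, i < j → j ≤ n → g i < g j := by
    intro i j hij hjn
    induction j with
    | zero => omega
    | succ m ih =>
      rcases Nat.lt_or_ge i m with h | h
      · exact (ih h (by omega)).trans (gmono_succ m (by omega))
      · have : i = m := by omega
        subst this
        exact gmono_succ i (by omega)
  have gmono' : ∀ i j : ℕ, i ≤ j → j ≤ n → g i ≤ g j := by
    intro i j hij hjn
    rcases Nat.lt_or_ge i j with h | h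
    · exact (gmono i j h hjn).le
    · have : i = j := by omega
      simp [this]
  -- the bump functions
  set f : Fin n → ℝ → ℝ :=
    fun i => Set.indicator (Set.Ioo (g i) (g (i + 1))) 1 with hf_def
  have hfvals : ∀ i z, f i z = 0 ∨ f i z = 1 := by
    intro i z
    by_cases h : z ∈ Set.Ioo (g (i : ℕ)) (g ((i : ℕ) + 1))
    · right; simp [hf_def, Set.indicator_of_mem h]
    · left; simp [hf_def, Set.indicator_of_notMem h]
  have hfcont : ∀ i : Fin n, ContinuousOn (f i) s := by
    intro i
    intro z hz
    apply ContinuousAt.continuousWithinAt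
    by_cases h : z ∈ Set.Ioo (g (i : ℕ)) (g ((i : ℕ) + 1))
    · apply Filter.EventuallyEq.continuousAt (y := (1 : ℝ))
      filter_upwards [isOpen_Ioo.mem_nhds h] with y hy
      simp [hf_def, Set.indicator, hy]
    · have hne1 : z ≠ g (i : ℕ) := fun h => (hg_notmem _ (h ▸ hz)).elim
      have hne2 : z ≠ g ((i : ℕ) + 1) := fun h => (hg_notmem _ (h ▸ hz)).elim
      have hnotIcc : z ∉ Set.Icc (g (i : ℕ)) (g ((i : ℕ) + 1)) := by
        intro hmem
        rcases lt_or_eq_of_le hmem.1 with h1 | h1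
        · rcases lt_or_eq_of_le hmem.2 with h2 | h2
          · exact h ⟨h1, h2⟩
          · exact hne2 h2
        · exact hne1 h1.symm
      apply Filter.EventuallyEq.continuousAt (y := (0 : ℝ))
      filter_upwards [isClosed_Icc.isOpen_compl.mem_nhds hnotIcc] with y hy
      have hy' : y ∉ Set.Ioo (g (i : ℕ)) (g ((i : ℕ) + 1)) :=
        fun hmem => hy (Set.Ioo_subset_Icc_self hmem)
      simp [hf_def, Set.indicator, hy']
  have hfsq : ∀ i z, f i z * f i z = f i z := by
    intro i z
    rcases hfvals i z with h | h <;> rw [h] <;> ring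
  -- point membership
  have htIoo : ∀ i : Fin n, t' i ∈ Set.Ioo (g (i : ℕ)) (g ((i : ℕ) + 1)) :=
    fun i => ⟨hgl i i.isLt, hgr i i.isLt⟩
  have hf_t : ∀ i : Fin n, f i (t' i) = 1 := by
    intro i
    simp [hf_def, Set.indicator_of_mem (htIoo i)]
  -- disjointness of the intervals
  have hdisj : ∀ i j : Fin n, i ≠ j → ∀ z, f i z = 0 ∨ f j z = 0 := by
    intro i j hij z
    by_contra h
    push_neg at h
    obtain ⟨h1, h2⟩ := h
    have hi : z ∈ Set.Ioo (g (i : ℕ)) (g ((i : ℕ) + 1)) := by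
      by_contra hmem
      exact h1 (Set.indicator_of_notMem hmem 1)
    have hj : z ∈ Set.Ioo (g (j : ℕ)) (g ((j : ℕ) + 1)) := by
      by_contra hmem
      exact h2 (Set.indicator_of_notMem hmem 1)
    rcases lt_or_gt_of_ne (fun h => hij (Fin.ext h) : (i : ℕ) ≠ (j : ℕ)) with h | h
    · have : g ((i : ℕ) + 1) ≤ g (j : ℕ) := gmono' _ _ (by omega) (by omega)
      have := hi.2.trans_le this
      exact absurd (this.trans hj.1) (lt_irrefl z)
    · have : g ((j : ℕ) + 1) ≤ g (i : ℕ) := gmono' _ _ (by omega) (by omega)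
      have := hj.2.trans_le this
      exact absurd (this.trans hi.1) (lt_irrefl z)
  -- the projections
  set p : Fin n → A := fun i => cfc (f i) x with hp_def
  have hp_sa : ∀ i, IsSelfAdjoint (p i) := fun i => cfc_predicate (f i) x
  have hp_idem : ∀ i, p i * p i = p i := by
    intro i
    rw [hp_def]
    rw [← cfc_mul (f i) (f i) x (hfcont i) (hfcont i)]
    exact cfc_congr fun z _ => hfsq i z
  have hp_ne : ∀ i, p i ≠ 0 := by
    intro i h0
    have hmap : spectrum ℝ (p i) = f i '' s := cfc_map_spectrum (f := f i) (a := x) hx (hfcont i)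
    have h1 : (1 : ℝ) ∈ spectrum ℝ (p i) := by
      rw [hmap]
      exact ⟨t' i, ht'mem i i.isLt, hf_t i⟩
    rw [h0, spectrum.zero_eq] at h1
    simp at h1
  have hKi : ∀ i, c ≤ (τ (p i)).re := fun i => hK _ (hp_ne i) (hp_sa i) (hp_idem i)
  -- the sum
  set F : ℝ → ℝ := ∑ i, f i with hF_def
  have hF_apply : ∀ z, F z = ∑ i, f i z := by
    intro z; rw [hF_def]; simp
  have hFcont : ContinuousOn F s := by
    have : F = fun z => ∑ i, f i z := funext hF_apply
    rw [this]
    exact continuousOn_finset_sum _ fun i _ => hfcont i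
  have hFvals : ∀ z, F z = 0 ∨ F z = 1 := by
    intro z
    by_cases hex : ∃ i : Fin n, f i z = 1
    · obtain ⟨i, hi⟩ := hex
      right
      rw [hF_apply]
      rw [Finset.sum_eq_single i]
      · exact hi
      · intro j _ hji
        rcases hdisj j i hji z with h | h
        · exact h
        · rw [h] at hi; norm_num at hi
      · intro h; exact absurd (Finset.mem_univ i) h
    · left
      rw [hF_apply]
      apply Finset.sum_eq_zero
      intro i _
      rcases hfvals i z with h | h
      · exact h
      · exact absurd ⟨i, h⟩ hex
  have hFsq : ∀ z, F z * F z = F z := by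
    intro z
    rcases hFvals z with h | h <;> rw [h] <;> ring
  set q : A := cfc F x with hq_def
  have hq_sum : q = ∑ i, p i := by
    rw [hq_def, hF_def, hp_def]
    exact cfc_sum_univ f x fun i => hfcont i
  have hq_sa : IsSelfAdjoint q := cfc_predicate F x
  have hq_idem : q * q = q := by
    rw [hq_def, ← cfc_mul F F x hFcont hFcont]
    exact cfc_congr fun z _ => hFsq z
  -- the complement
  set r : A := cfc (fun z => 1 - F z) x with hr_def
  have hrcont : ContinuousOn (fun z => 1 - F z) s := continuousOn_const.sub hFcont
  have hr_sa : IsSelfAdjoint r := cfc_predicate _ x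
  have hr_idem : r * r = r := by
    rw [hr_def, ← cfc_mul _ _ x hrcont hrcont]
    apply cfc_congr
    intro z _
    show (1 - F z) * (1 - F z) = 1 - F z
    rcases hFvals z with h | h <;> rw [h] <;> ring
  have hqr : q + r = 1 := by
    rw [hq_def, hr_def, ← cfc_add x F (fun z => 1 - F z) hFcont hrcont]
    have : cfc (fun z => F z + (1 - F z)) x = cfc (fun _ : ℝ => (1 : ℝ)) x :=
      cfc_congr fun z _ => by show F z + (1 - F z) = 1; ring
    rw [this, cfc_const_one ℝ x]
  -- positivity of τ on r and q
  have hr_pos : 0 ≤ (τ r).re := by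
    have := (hτpos r).1
    rwa [hr_sa.star_eq, hr_idem] at this
  -- sum bound
  have hsum_le : (n : ℝ) * c ≤ (τ q).re := by
    rw [hq_sum, map_sum]
    rw [Complex.re_sum]
    calc (n : ℝ) * c = ∑ _i : Fin n, c := by
          rw [Finset.sum_const, Finset.card_univ, Fintype.card_fin, nsmul_eq_mul]
      _ ≤ ∑ i, (τ (p i)).re := Finset.sum_le_sum fun i _ => hKi i
  have h1 : (τ 1).re = (τ q).re + (τ r).re := by
    rw [← hqr, map_add, Complex.add_re]
  have : (n : ℝ) * c ≤ (τ 1).re := by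
    rw [h1]
    linarith
  linarith
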